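/- Assume the CZ-decomposition setting in dimension n. There exists A₀ ≥ 1 depending only on n such that for every A ≥ A₀ the following holds: the number of cubes Q ∈ CZ that are not interstellar is at most C(A)·N, where C(A) depends only on A and n. -/

import Mathlib

noncomputable section
namespace S9
set_option linter.unusedSectionVars false
set_option maxHeartbeats 4000000

variable {X : Type*} [DecidableEq X]


/-- connectivity via an edge set -/
def Conn (S : Finset (X × X)) (a b : X) : Prop :=
  Relation.ReflTransGen (fun p q => (p, q) ∈ S ∨ (q, p) ∈ S) a b

theorem Conn.rfl {S : Finset (X × X)} {a : X} : Conn S a a := Relation.ReflTransGen.refl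

theorem conn_symm {S : Finset (X × X)} {a b : X} (h : Conn S a b) : Conn S b a := by
  induction h with
  | refl => exact Conn.rfl
  | tail _ hstep ih =>
      exact Relation.ReflTransGen.trans (Relation.ReflTransGen.single (Or.symm hstep)) ih

theorem conn_trans {S : Finset (X × X)} {a b c : X} (h : Conn S a b) (h' : Conn S b c) :
    Conn S a c := Relation.ReflTransGen.trans h h'

theorem conn_mono {S S' : Finset (X × X)} (hS : S ⊆ S') {a b : X} (h : Conn S a b) :
    Conn S' a b := by
  induction h with
  | refl => exact Conn.rfl
  | tail _ hstep ih =>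
      exact Relation.ReflTransGen.tail ih (by rcases hstep with h1 | h1
                                              exacts [Or.inl (hS h1), Or.inr (hS h1)])

theorem conn_single {S : Finset (X × X)} {p : X × X} (hp : p ∈ S) : Conn S p.1 p.2 :=
  Relation.ReflTransGen.single (Or.inl hp)

/-- characterization of connectivity after inserting an edge -/
theorem conn_insert_iff {S : Finset (X × X)} {u v a b : X} :
    Conn (insert (u, v) S) a b ↔
      Conn S a b ∨ (Conn S a u ∧ Conn S v b) ∨ (Conn S a v ∧ Conn S u b) := by
  constructor
  · intro h
    induction h with
    | refl => exact Or.inl Conn.rfl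
    | @tail c d hcd hstep ih =>
        have hstep' : ((c, d) ∈ S ∨ (d, c) ∈ S) ∨ ((c, d) = (u, v) ∨ (d, c) = (u, v)) := by
          rcases hstep with h1 | h1 <;> rcases Finset.mem_insert.1 h1 with h2 | h2 <;> tauto
        rcases hstep' with hold | hnew
        · rcases ih with h1 | ⟨h1, h2⟩ | ⟨h1, h2⟩
          · exact Or.inl (Relation.ReflTransGen.tail h1 hold)
          · exact Or.inr (Or.inl ⟨h1, Relation.ReflTransGen.tail h2 hold⟩)
          · exact Or.inr (Or.inr ⟨h1, Relation.ReflTransGen.tail h2 hold⟩)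
        · rcases hnew with h1 | h1
          · rw [Prod.mk.injEq] at h1
            obtain ⟨rfl, rfl⟩ := h1
            rcases ih with h1 | ⟨h1, h2⟩ | ⟨h1, h2⟩
            · exact Or.inr (Or.inl ⟨h1, Conn.rfl⟩)
            · exact Or.inl (conn_trans h1 (conn_symm h2))
            · exact Or.inl h1
          · rw [Prod.mk.injEq] at h1
            obtain ⟨rfl, rfl⟩ := h1
            rcases ih with h1 | ⟨h1, h2⟩ | ⟨h1, h2⟩
            · exact Or.inr (Or.inr ⟨h1, Conn.rfl⟩)
            · exact Or.inl h1
            · exact Or.inl (conn_trans h1 (conn_symm h2))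
  · intro h
    have hS : S ⊆ insert (u, v) S := Finset.subset_insert _ _
    have huv : Conn (insert (u, v) S) u v := conn_single (Finset.mem_insert_self _ _)
    rcases h with h1 | ⟨h1, h2⟩ | ⟨h1, h2⟩
    · exact conn_mono hS h1
    · exact conn_trans (conn_mono hS h1) (conn_trans huv (conn_mono hS h2))
    · exact conn_trans (conn_mono hS h1) (conn_trans (conn_symm huv) (conn_mono hS h2))


open Classical in

/-- the connected component of `x` inside `E` -/
def compOf (E : Finset X) (S : Finset (X × X)) (x : X) : Finset X :=
  E.filter (fun y => Conn S x y)

/-- number of connected components -/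
def mu (E : Finset X) (S : Finset (X × X)) : ℕ := (E.image (compOf E S)).card

theorem mem_compOf {E : Finset X} {S : Finset (X × X)} {x y : X} :
    y ∈ compOf E S x ↔ y ∈ E ∧ Conn S x y := by
  classical
  simp [compOf]

theorem compOf_eq_of_conn {E : Finset X} {S : Finset (X × X)} {a b : X} (h : Conn S a b) :
    compOf E S a = compOf E S b := by
  ext y
  simp only [mem_compOf]
  exact ⟨fun ⟨h1, h2⟩ => ⟨h1, conn_trans (conn_symm h) h2⟩,
    fun ⟨h1, h2⟩ => ⟨h1, conn_trans h h2⟩⟩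

theorem conn_empty {a b : X} (h : Conn (∅ : Finset (X × X)) a b) : a = b := by
  induction h with
  | refl => rfl
  | tail _ hstep ih => rcases hstep with h1 | h1 <;> exact absurd h1 (Finset.notMem_empty _)

theorem mu_empty (E : Finset X) : mu E (∅ : Finset (X × X)) = E.card := by
  unfold mu
  rw [Finset.card_image_of_injOn]
  intro x hx y hy hxy
  have : x ∈ compOf E ∅ y := hxy ▸ (mem_compOf.2 ⟨hx, Conn.rfl⟩)
  exact (conn_empty (mem_compOf.1 this).2).symm

theorem mu_pos {E : Finset X} (hE : E.Nonempty) (S : Finset (X × X)) : 1 ≤ mu E S := by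
  obtain ⟨x, hx⟩ := hE
  exact Finset.card_pos.2 ⟨_, Finset.mem_image_of_mem _ hx⟩

theorem mu_insert {E : Finset X} {S : Finset (X × X)} {u v : X} (hu : u ∈ E) (hv : v ∈ E)
    (h : ¬ Conn S u v) : mu E (insert (u, v) S) + 1 ≤ mu E S := by
  classical
  set S' := insert (u, v) S with hS'
  -- components either merge into comp of u, or stay the same
  have hcomp : ∀ x ∈ E, (Conn S x u ∨ Conn S x v → compOf E S' x = compOf E S' u) ∧
      (¬ (Conn S x u ∨ Conn S x v) → compOf E S' x = compOf E S x) := by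
    intro x hx
    constructor
    · intro hc
      apply compOf_eq_of_conn
      apply conn_symm
      rcases hc with hc | hc
      · exact conn_symm (conn_mono (Finset.subset_insert _ _) hc)
      · exact conn_trans (conn_single (Finset.mem_insert_self (u,v) S))
          (conn_symm (conn_mono (Finset.subset_insert _ _) hc))
    · intro hc
      ext y
      simp only [mem_compOf]
      constructor
      · rintro ⟨h1, h2⟩
        rcases conn_insert_iff.1 h2 with h3 | ⟨h3, h4⟩ | ⟨h3, h4⟩
        · exact ⟨h1, h3⟩
        · exact absurd (Or.inl h3) hc
        · exact absurd (Or.inr h3) hc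
      · rintro ⟨h1, h2⟩
        exact ⟨h1, conn_mono (Finset.subset_insert _ _) h2⟩
  have hne : compOf E S u ≠ compOf E S v := by
    intro he
    have : v ∈ compOf E S u := he ▸ mem_compOf.2 ⟨hv, Conn.rfl⟩
    exact h (mem_compOf.1 this).2
  have hsub : E.image (compOf E S') ⊆
      insert (compOf E S' u) (((E.image (compOf E S)).erase (compOf E S u)).erase (compOf E S v)) := by
    intro c hc
    obtain ⟨x, hx, rfl⟩ := Finset.mem_image.1 hc
    by_cases hcase : Conn S x u ∨ Conn S x v
    · rw [(hcomp x hx).1 hcase]; exact Finset.mem_insert_self _ _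
    · rw [(hcomp x hx).2 hcase]
      apply Finset.mem_insert_of_mem
      rw [Finset.mem_erase, Finset.mem_erase]
      refine ⟨?_, ?_, Finset.mem_image_of_mem _ hx⟩
      · intro he
        have : v ∈ compOf E S x := he ▸ mem_compOf.2 ⟨hv, Conn.rfl⟩
        exact hcase (Or.inr (mem_compOf.1 this).2)
      · intro he
        have : u ∈ compOf E S x := he ▸ mem_compOf.2 ⟨hu, Conn.rfl⟩
        exact hcase (Or.inl (mem_compOf.1 this).2)
  have h1 : mu E S' ≤ (((E.image (compOf E S)).erase (compOf E S u)).erase (compOf E S v)).card + 1 := by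
    calc mu E S' ≤ _ := Finset.card_le_card hsub
    _ ≤ _ := Finset.card_insert_le _ _
  have hvmem : compOf E S v ∈ ((E.image (compOf E S)).erase (compOf E S u)) := by
    rw [Finset.mem_erase]
    exact ⟨fun he => hne he.symm, Finset.mem_image_of_mem _ hv⟩
  have humem : compOf E S u ∈ E.image (compOf E S) := Finset.mem_image_of_mem _ hu
  have h2 : (((E.image (compOf E S)).erase (compOf E S u)).erase (compOf E S v)).card + 2 ≤ mu E S := by
    rw [Finset.card_erase_of_mem hvmem, Finset.card_erase_of_mem humem]
    have : 2 ≤ ((E.image (compOf E S)).erase (compOf E S u)).card + 1 := by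
      have := Finset.card_pos.2 ⟨_, hvmem⟩
      omega
    unfold mu
    have := Finset.card_erase_of_mem humem
    have hc1 : 1 ≤ (E.image (compOf E S)).card := Finset.card_pos.2 ⟨_, humem⟩
    have hc2 : 1 ≤ ((E.image (compOf E S)).erase (compOf E S u)).card := Finset.card_pos.2 ⟨_, hvmem⟩
    omega
  omega

variable [MetricSpace X]

def w (e : X × X) : ℝ := dist e.1 e.2


def pmin (P : Finset (X × X)) (h : P.Nonempty) : X × X :=
  Classical.choose (P.exists_min_image w h)

theorem pmin_mem {P : Finset (X × X)} (h : P.Nonempty) : pmin P h ∈ P :=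
  (Classical.choose_spec (P.exists_min_image w h)).1

theorem pmin_min {P : Finset (X × X)} (h : P.Nonempty) : ∀ p ∈ P, w (pmin P h) ≤ w p :=
  (Classical.choose_spec (P.exists_min_image w h)).2

open Classical in
def krusk : ℕ → Finset (X × X) → Finset (X × X) → Finset (X × X)
  | 0, _, S => S
  | (f+1), P, S =>
    if h : P.Nonempty then
      krusk f (P.erase (pmin P h))
        (if Conn S (pmin P h).1 (pmin P h).2 then S else insert (pmin P h) S)
    else S

theorem krusk_sub_left : ∀ (f : ℕ) (P S : Finset (X × X)), S ⊆ krusk f P S := by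
  intro f
  induction f with
  | zero => intro P S; simp [krusk]
  | succ f ih =>
      intro P S
      rw [krusk]
      split
      · rename_i h
        split
        · exact ih _ _
        · exact (Finset.subset_insert _ _).trans (ih _ _)
      · exact subset_rfl

theorem krusk_sub_right : ∀ (f : ℕ) (P S : Finset (X × X)), krusk f P S ⊆ S ∪ P := by
  intro f
  induction f with
  | zero => intro P S; simp [krusk]
  | succ f ih =>
      intro P S
      rw [krusk]
      split
      · rename_i h
        refine (ih _ _).trans ?_
        split
        · exact Finset.union_subset (Finset.subset_union_left)
            ((Finset.erase_subset _ _).trans Finset.subset_union_right)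
        · intro x hx
          rcases Finset.mem_union.1 hx with hx | hx
          · rcases Finset.mem_insert.1 hx with rfl | hx
            · exact Finset.mem_union_right _ (pmin_mem h)
            · exact Finset.mem_union_left _ hx
          · exact Finset.mem_union_right _ ((Finset.erase_subset _ _) hx)
      · exact Finset.subset_union_left

theorem krusk_spec : ∀ (f : ℕ) (P S : Finset (X × X)), P.card ≤ f →
    (∀ s ∈ S, ∀ p ∈ P, w s ≤ w p) →
    ∀ p ∈ P, Conn ((krusk f P S).filter (fun e => w e ≤ w p)) p.1 p.2 := by
  classical
  intro f
  induction f with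
  | zero => intro P S hf _ p hp
            have : P = ∅ := Finset.card_eq_zero.1 (Nat.le_zero.1 hf)
            simp [this] at hp
  | succ f ih =>
      intro P S hf hinv p hp
      have hne : P.Nonempty := ⟨p, hp⟩
      rw [krusk]
      rw [dif_pos hne]
      set p0 := pmin P hne with hp0
      have hfe : (P.erase p0).card ≤ f := by
        have h1 := Finset.card_erase_of_mem (show p0 ∈ P from pmin_mem hne)
        have h2 := Finset.card_pos.2 hne
        omega
      by_cases hpp : p = p0
      · subst hpp
        split
        · rename_i hconn
          have hsub : S ⊆ Finset.filter (fun e => w e ≤ w p0) (krusk f (P.erase p0) S) := by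
            intro e he
            rw [Finset.mem_filter]
            exact ⟨krusk_sub_left _ _ _ he, hinv e he p0 hp⟩
          exact conn_mono hsub hconn
        · apply conn_single
          rw [Finset.mem_filter]
          exact ⟨krusk_sub_left _ _ _ (Finset.mem_insert_self _ _), le_refl _⟩
      · have hpe : p ∈ P.erase p0 := Finset.mem_erase.2 ⟨hpp, hp⟩
        apply ih _ _ hfe _ p hpe
        intro s hs q hq
        have hq' : q ∈ P := Finset.mem_of_mem_erase hq
        split at hs
        · exact hinv s hs q hq'
        · rcases Finset.mem_insert.1 hs with rfl | hs
          · exact pmin_min hne q hq'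
          · exact hinv s hs q hq'

theorem krusk_card (E : Finset X) : ∀ (f : ℕ) (P S : Finset (X × X)),
    (∀ p ∈ P, p.1 ∈ E ∧ p.2 ∈ E) →
    (krusk f P S).card + mu E (krusk f P S) ≤ S.card + mu E S := by
  classical
  intro f
  induction f with
  | zero => intro P S _; simp [krusk]
  | succ f ih =>
      intro P S hP
      rw [krusk]
      split
      · rename_i h
        have hP' : ∀ p ∈ P.erase (pmin P h), p.1 ∈ E ∧ p.2 ∈ E := fun p hp =>
          hP p (Finset.mem_of_mem_erase hp)
        refine (ih _ _ hP').trans ?_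
        split
        · exact le_refl _
        · rename_i hnc
          obtain ⟨h1, h2⟩ := hP _ (pmin_mem h)
          have hmu := mu_insert (S := S) h1 h2 (by intro hc; exact hnc hc)
          rw [Prod.mk.eta] at hmu
          have hcard := Finset.card_insert_le (pmin P h) S
          omega
      · exact le_refl _

def pairsOf (E : Finset X) : Finset (X × X) := (E ×ˢ E).filter (fun p => p.1 ≠ p.2)

def MST (E : Finset X) : Finset (X × X) := krusk (pairsOf E).card (pairsOf E) ∅

theorem MST_subset (E : Finset X) : MST E ⊆ pairsOf E := by
  have := krusk_sub_right (pairsOf E).card (pairsOf E) (∅ : Finset (X × X))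
  simpa [MST] using this

theorem mem_pairsOf {E : Finset X} {e : X × X} (he : e ∈ pairsOf E) :
    e.1 ∈ E ∧ e.2 ∈ E ∧ e.1 ≠ e.2 := by
  rw [pairsOf, Finset.mem_filter, Finset.mem_product] at he
  exact ⟨he.1.1, he.1.2, he.2⟩

theorem MST_card {E : Finset X} (hE : E.Nonempty) : (MST E).card + 1 ≤ E.card := by
  have h := krusk_card E (pairsOf E).card (pairsOf E) ∅
    (fun p hp => ⟨(mem_pairsOf hp).1, (mem_pairsOf hp).2.1⟩)
  rw [mu_empty, Finset.card_empty] at h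
  have := mu_pos hE (krusk (pairsOf E).card (pairsOf E) (∅ : Finset (X × X)))
  unfold MST
  omega

theorem MST_pairs {E : Finset X} {e : X × X} (he : e ∈ MST E) :
    e.1 ∈ E ∧ e.2 ∈ E ∧ e.1 ≠ e.2 := mem_pairsOf (MST_subset E he)

theorem MST_conn {E : Finset X} {u v : X} (hu : u ∈ E) (hv : v ∈ E) (huv : u ≠ v) :
    Conn ((MST E).filter (fun e => w e ≤ dist u v)) u v := by
  have hp : (u, v) ∈ pairsOf E := by
    rw [pairsOf, Finset.mem_filter, Finset.mem_product]
    exact ⟨⟨hu, hv⟩, huv⟩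
  have := krusk_spec (pairsOf E).card (pairsOf E) ∅ (le_refl _) (by simp) (u, v) hp
  convert this <;> rfl



/-- geometric series bound -/
theorem geom_bound : ∀ (m : ℕ) (K : Finset ℤ) (c : ℝ), K.card = m → 0 < c →
    (∀ k ∈ K, c ≤ (2:ℝ) ^ k) → ∑ k ∈ K, ((2:ℝ) ^ k)⁻¹ ≤ 2 / c := by
  intro m
  induction m with
  | zero =>
      intro K c hc h0 _
      rw [Finset.card_eq_zero.1 hc]
      simp
      positivity
  | succ m ih =>
      intro K c hc h0 hK
      have hne : K.Nonempty := Finset.card_pos.1 (by omega)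
      set k0 := K.min' hne with hk0
      have hk0m : k0 ∈ K := K.min'_mem hne
      have hsum : ∑ k ∈ K, ((2:ℝ) ^ k)⁻¹ =
          ((2:ℝ) ^ k0)⁻¹ + ∑ k ∈ K.erase k0, ((2:ℝ) ^ k)⁻¹ :=
        (Finset.add_sum_erase _ _ hk0m).symm
      have hcard : (K.erase k0).card = m := by
        have := Finset.card_erase_of_mem hk0m
        omega
      have hrec : ∑ k ∈ K.erase k0, ((2:ℝ) ^ k)⁻¹ ≤ 2 / ((2:ℝ) ^ (k0 + 1)) := by
        apply ih _ _ hcard (by positivity)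
        intro k hk
        have h1 : k0 < k := by
          rcases Finset.mem_erase.1 hk with ⟨hne2, hkK⟩
          exact lt_of_le_of_ne (K.min'_le k hkK) (Ne.symm hne2)
        have : (k0 + 1) ≤ k := by omega
        exact zpow_le_zpow_right₀ (by norm_num) this
      have h2 : ((2:ℝ) ^ k0)⁻¹ ≤ 1 / c := by
        rw [inv_eq_one_div]
        apply div_le_div_of_nonneg_left (by norm_num) h0 (hK _ hk0m)
      have h3 : 2 / ((2:ℝ) ^ (k0 + 1)) = ((2:ℝ) ^ k0)⁻¹ := by
        rw [zpow_add₀ (by norm_num : (2:ℝ) ≠ 0)]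
        field_simp
      rw [hsum]
      have hrec2 : ∑ k ∈ K.erase k0, ((2:ℝ) ^ k)⁻¹ ≤ ((2:ℝ) ^ k0)⁻¹ := h3 ▸ hrec
      calc ((2:ℝ) ^ k0)⁻¹ + ∑ k ∈ K.erase k0, ((2:ℝ) ^ k)⁻¹
          ≤ 1/c + 1/c := add_le_add h2 (hrec2.trans h2)
        _ = 2 / c := by ring

/-- window count bound : the number of `k ∈ K` with `a < 2^k` and `b·2^k < ...` etc. -/
theorem window_bound (K : Finset ℤ) (W v : ℝ) (hW : 1 ≤ W) (hv : 0 < v) (L : ℕ)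
    (hL : 8 * W^2 ≤ (2:ℝ) ^ (L:ℤ)) :
    ((K.filter (fun k => (2:ℝ)^k / (8*W) < v ∧ v ≤ W * (2:ℝ)^k)).card : ℝ) ≤ (L : ℝ) + 1 := by
  classical
  set F := K.filter (fun k => (2:ℝ)^k / (8*W) < v ∧ v ≤ W * (2:ℝ)^k) with hF
  rcases F.eq_empty_or_nonempty with he | hne
  · rw [he]; simp; positivity
  · set k0 := F.min' hne with hk0
    have hk0m : k0 ∈ F := F.min'_mem hne
    have hsub : F ⊆ Finset.Icc k0 (k0 + L) := by
      intro k hk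
      rw [Finset.mem_Icc]
      refine ⟨F.min'_le k hk, ?_⟩
      have h1 : (2:ℝ)^k / (8*W) < v := (Finset.mem_filter.1 hk).2.1
      have h2 : v ≤ W * (2:ℝ)^k0 := (Finset.mem_filter.1 hk0m).2.2
      have hWpos : (0:ℝ) < W := lt_of_lt_of_le one_pos hW
      have h3 : (2:ℝ)^k < 8*W^2 * (2:ℝ)^k0 := by
        have := lt_of_lt_of_le h1 h2
        calc (2:ℝ)^k = ((2:ℝ)^k / (8*W)) * (8*W) := by field_simp
          _ < (W * (2:ℝ)^k0) * (8*W) := by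
              apply mul_lt_mul_of_pos_right this (by positivity)
          _ = 8*W^2 * (2:ℝ)^k0 := by ring
      have h4 : (2:ℝ)^k < (2:ℝ)^(k0 + L) := by
        calc (2:ℝ)^k < 8*W^2 * (2:ℝ)^k0 := h3
          _ ≤ (2:ℝ)^(L:ℤ) * (2:ℝ)^k0 := by
              apply mul_le_mul_of_nonneg_right hL (by positivity)
          _ = (2:ℝ)^(k0 + L) := by rw [← zpow_add₀ (by norm_num : (2:ℝ) ≠ 0)]; ring_nf
      have := (zpow_lt_zpow_iff_right₀ (by norm_num : (1:ℝ) < 2)).1 h4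
      omega
    calc (F.card : ℝ) ≤ ((Finset.Icc k0 (k0 + L)).card : ℝ) := by
          exact_mod_cast Finset.card_le_card hsub
      _ = (L : ℝ) + 1 := by
          rw [Int.card_Icc]
          have : k0 + ↑L + 1 - k0 = (L:ℤ) + 1 := by ring
          rw [this]
          simp

theorem ceil_pow_bound (r : ℝ) (hr : 0 ≤ r) : r ≤ (2:ℝ) ^ ((⌈r⌉₊ : ℤ)) := by
  calc r ≤ (⌈r⌉₊ : ℝ) := Nat.le_ceil r
    _ ≤ (2:ℝ) ^ ((⌈r⌉₊ : ℤ)) := by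
        rw [zpow_natCast]
        exact_mod_cast (Nat.lt_two_pow_self (n := ⌈r⌉₊)).le


def ChainE (E : Finset X) (τ : ℝ) (a b : X) : Prop :=
  Relation.ReflTransGen (fun p q => p ∈ E ∧ q ∈ E ∧ dist p q ≤ τ) a b

theorem ChainE.rfl {E : Finset X} {τ : ℝ} {a : X} : ChainE E τ a a := Relation.ReflTransGen.refl

theorem chainE_symm {E : Finset X} {τ : ℝ} {a b : X} (h : ChainE E τ a b) : ChainE E τ b a := by
  induction h with
  | refl => exact ChainE.rfl
  | tail _ hstep ih =>
      exact Relation.ReflTransGen.trans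
        (Relation.ReflTransGen.single ⟨hstep.2.1, hstep.1, by rw [dist_comm]; exact hstep.2.2⟩) ih

theorem chainE_trans {E : Finset X} {τ : ℝ} {a b c : X} (h : ChainE E τ a b)
    (h' : ChainE E τ b c) : ChainE E τ a c := Relation.ReflTransGen.trans h h'

theorem chain_to_conn {E : Finset X} {τ : ℝ} {a b : X} (hab : ChainE E τ a b) :
    Conn ((MST E).filter (fun e => w e ≤ τ)) a b := by
  classical
  induction hab with
  | refl => exact Conn.rfl
  | @tail b c _ hstep ih =>
      rcases hstep with ⟨hb, hc, hbc⟩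
      by_cases hbceq : b = c
      · subst hbceq; exact ih
      · refine Relation.ReflTransGen.trans ih ?_
        have := MST_conn hb hc hbceq
        apply conn_mono ?_ this
        intro e he
        rw [Finset.mem_filter] at he ⊢
        exact ⟨he.1, he.2.trans hbc⟩

theorem straddle {E : Finset X} {τ R : ℝ} {x z : X} (hr0 : (0:ℝ) ≤ τ)
    (hch : ChainE E τ x z) (hz : R < dist x z) {r : ℝ} (hr : 0 ≤ r) (hrR : r < R) :
    ∃ e ∈ (MST E).filter (fun e => w e ≤ τ),
      min (dist x e.1) (dist x e.2) ≤ r ∧ r < max (dist x e.1) (dist x e.2) := by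
  classical
  by_contra hcon
  push_neg at hcon
  set C := (MST E).filter (fun e => w e ≤ τ) with hC
  have hconn : Conn C x z := chain_to_conn hch
  have hkey : ∀ v, Conn C x v → dist x v ≤ r := by
    intro v hv
    induction hv with
    | refl => simpa using hr
    | @tail b c _ hstep ih =>
        rcases hstep with h1 | h1
        · have hmin : min (dist x b) (dist x c) ≤ r := le_trans (min_le_left _ _) ih
          have := hcon (b, c) h1 hmin
          exact le_trans (le_max_right (dist x b) (dist x c)) this
        · have hmin : min (dist x c) (dist x b) ≤ r := le_trans (min_le_right _ _) ih
          have := hcon (c, b) h1 hmin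
          exact le_trans (le_max_left (dist x c) (dist x b)) this
  have := hkey z hconn
  linarith

theorem resB (E : Finset X) {τ R : ℝ} (hτ : 0 < τ) (hτR : 2*τ ≤ R) {x z : X}
    (hch : ChainE E τ x z) (hz : R < dist x z) :
    R - τ ≤ ∑ e ∈ (MST E).filter (fun e => w e ≤ τ ∧ dist x e.1 ≤ R ∧ dist x e.2 ≤ R), w e := by
  classical
  set Cball := (MST E).filter (fun e => w e ≤ τ ∧ dist x e.1 ≤ R ∧ dist x e.2 ≤ R) with hCball
  have hRpos : 0 < R := by linarith
  have hcov : Set.Ico (0:ℝ) (R - τ) ⊆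
      ⋃ e ∈ Cball, Set.Ico (min (dist x e.1) (dist x e.2)) (max (dist x e.1) (dist x e.2)) := by
    intro r hrmem
    rcases hrmem with ⟨hr0, hrRt⟩
    obtain ⟨e, heC, hmin, hmax⟩ := straddle hτ.le hch hz hr0 (by linarith)
    have heM : e ∈ MST E ∧ w e ≤ τ := by
      rw [Finset.mem_filter] at heC; exact heC
    have habs : max (dist x e.1) (dist x e.2) ≤ min (dist x e.1) (dist x e.2) + w e := by
      have h1 : |dist e.1 x - dist e.2 x| ≤ dist e.1 e.2 := abs_dist_sub_le _ _ _
      rw [dist_comm e.1 x, dist_comm e.2 x] at h1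
      rw [abs_le] at h1
      rcases le_total (dist x e.1) (dist x e.2) with h | h <;>
        simp [max_eq_right, max_eq_left, min_eq_left, min_eq_right, h, w] <;> linarith
    have heCball : e ∈ Cball := by
      rw [hCball, Finset.mem_filter]
      refine ⟨heM.1, heM.2, ?_, ?_⟩
      · calc dist x e.1 ≤ max (dist x e.1) (dist x e.2) := le_max_left _ _
          _ ≤ min (dist x e.1) (dist x e.2) + w e := habs
          _ ≤ r + τ := add_le_add hmin heM.2
          _ ≤ R := by linarith
      · calc dist x e.2 ≤ max (dist x e.1) (dist x e.2) := le_max_right _ _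
          _ ≤ min (dist x e.1) (dist x e.2) + w e := habs
          _ ≤ r + τ := add_le_add hmin heM.2
          _ ≤ R := by linarith
    exact Set.mem_biUnion heCball ⟨hmin, hmax⟩
  have hvol : ENNReal.ofReal (R - τ) ≤
      ∑ e ∈ Cball, ENNReal.ofReal (max (dist x e.1) (dist x e.2) - min (dist x e.1) (dist x e.2)) := by
    calc ENNReal.ofReal (R - τ) = MeasureTheory.volume (Set.Ico (0:ℝ) (R - τ)) := by
          rw [Real.volume_Ico]; norm_num
      _ ≤ MeasureTheory.volume (⋃ e ∈ Cball, Set.Ico (min (dist x e.1) (dist x e.2))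
            (max (dist x e.1) (dist x e.2))) := MeasureTheory.measure_mono hcov
      _ ≤ ∑ e ∈ Cball, MeasureTheory.volume (Set.Ico (min (dist x e.1) (dist x e.2))
            (max (dist x e.1) (dist x e.2))) := MeasureTheory.measure_biUnion_finset_le _ _
      _ = ∑ e ∈ Cball, ENNReal.ofReal (max (dist x e.1) (dist x e.2) - min (dist x e.1) (dist x e.2)) := by
          apply Finset.sum_congr rfl
          intro e _
          rw [Real.volume_Ico]
  have hnn : ∀ e ∈ Cball, (0:ℝ) ≤ max (dist x e.1) (dist x e.2) - min (dist x e.1) (dist x e.2) :=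
    fun e _ => sub_nonneg.2 (min_le_max)
  rw [← ENNReal.ofReal_sum_of_nonneg hnn] at hvol
  have hle : R - τ ≤ ∑ e ∈ Cball, (max (dist x e.1) (dist x e.2) - min (dist x e.1) (dist x e.2)) := by
    have hsnn : (0:ℝ) ≤ ∑ e ∈ Cball, (max (dist x e.1) (dist x e.2) - min (dist x e.1) (dist x e.2)) :=
      Finset.sum_nonneg hnn
    exact (ENNReal.ofReal_le_ofReal_iff hsnn).1 hvol
  refine hle.trans (Finset.sum_le_sum ?_)
  intro e _
  have h1 : |dist e.1 x - dist e.2 x| ≤ dist e.1 e.2 := abs_dist_sub_le _ _ _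
  rw [dist_comm e.1 x, dist_comm e.2 x] at h1
  rw [abs_le] at h1
  rcases le_total (dist x e.1) (dist x e.2) with h | h <;>
    simp [max_eq_right, max_eq_left, min_eq_left, min_eq_right, h, w] <;> linarith

theorem caseA_edge (E : Finset X) {τ M : ℝ} {x y : X} (hx : x ∈ E) (hy : y ∈ E)
    (hxy : x ≠ y) (hd : dist x y ≤ M) (hnc : ¬ ChainE E τ x y) :
    ∃ e ∈ MST E, (τ < w e ∧ w e ≤ M) ∧ (ChainE E τ x e.1 ∨ ChainE E τ x e.2) := by
  classical
  by_contra hcon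
  push_neg at hcon
  have hkey : ∀ v, Conn ((MST E).filter (fun e => w e ≤ M)) x v → ChainE E τ x v := by
    intro v hv
    induction hv with
    | refl => exact ChainE.rfl
    | @tail b c _ hstep ih =>
        have hstep' : ∃ e ∈ (MST E).filter (fun e => w e ≤ M),
            (e = (b, c) ∨ e = (c, b)) := by
          rcases hstep with h1 | h1
          · exact ⟨(b, c), h1, Or.inl rfl⟩
          · exact ⟨(c, b), h1, Or.inr rfl⟩
        obtain ⟨e, he, hee⟩ := hstep'
        rw [Finset.mem_filter] at he
        obtain ⟨heM, hwM⟩ := he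
        obtain ⟨he1, he2, _⟩ := MST_pairs heM
        by_cases hwτ : w e ≤ τ
        · -- small edge: extend the chain
          refine chainE_trans ih (Relation.ReflTransGen.single ?_)
          rcases hee with rfl | rfl
          · exact ⟨he1, he2, hwτ⟩
          · exact ⟨he2, he1, by rw [dist_comm]; exact hwτ⟩
        · -- big edge with an endpoint chain-connected to x : contradiction
          exfalso
          have := hcon e heM ⟨lt_of_not_ge hwτ, hwM⟩
          rcases hee with rfl | rfl
          · exact this.1 ih
          · exact this.2 ih
  have : Conn ((MST E).filter (fun e => w e ≤ M)) x y := by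
    apply conn_mono ?_ (MST_conn hx hy hxy)
    intro e he
    rw [Finset.mem_filter] at he ⊢
    exact ⟨he.1, he.2.trans hd⟩
  exact hnc (hkey y this)


theorem counting (W : ℝ) (hW : 1024 ≤ W) (E : Finset X) (K : Finset ℤ) (T : ℤ → Finset X)
    (hTE : ∀ k, T k ⊆ E)
    (hsep : ∀ k, ∀ x ∈ T k, ∀ y ∈ T k, x ≠ y → 100*W^2*(2:ℝ)^k < dist x y)
    (hwit : ∀ k ∈ K, ∀ x ∈ T k, ∃ y ∈ E, (2:ℝ)^k/W < dist x y ∧ dist x y ≤ W*(2:ℝ)^k) :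
    (∑ k ∈ K, ((T k).card : ℝ)) ≤ 17*W^2 * E.card := by
  classical
  have hWpos : (0:ℝ) < W := by linarith
  have hWsq1 : (0:ℝ) ≤ W - 1 := by linarith
  have hWsq : (1:ℝ) ≤ W^2 := by nlinarith
  have hWcube : (1:ℝ) ≤ W^3 := by nlinarith [mul_nonneg (mul_nonneg hWsq1 hWsq1) hWsq1, sq_nonneg W, mul_nonneg hWsq1 hWsq1]
  rcases E.eq_empty_or_nonempty with rfl | hE
  · have hTk : ∀ k, T k = ∅ := fun k => Finset.subset_empty.1 (hTE k)
    simp [hTk]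
  obtain ⟨x0, hx0⟩ := id hE
  set τf : ℤ → ℝ := fun k => (2:ℝ)^k/(8*W) with hτdef
  set Rf : ℤ → ℝ := fun k => (2:ℝ)^k/(2*W) with hRdef
  have hτpos : ∀ k, 0 < τf k := fun k => by simp only [hτdef]; positivity
  have hRpos : ∀ k, 0 < Rf k := fun k => by simp only [hRdef]; positivity
  set Bp : ℤ → X → Prop := fun k x => ∃ z ∈ E, ChainE E (τf k) x z ∧ Rf k < dist x z with hBpdef
  set Bk : ℤ → Finset X := fun k => (T k).filter (fun x => Bp k x) with hBkdef
  set Ak : ℤ → Finset X := fun k => (T k) \ (Bk k) with hAkdef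
  have hAksub : ∀ k, Ak k ⊆ T k := fun k => Finset.sdiff_subset
  have hAkprop : ∀ k, ∀ x ∈ Ak k, x ∈ T k ∧ ¬ Bp k x := by
    intro k x hx
    rw [hAkdef] at hx
    have h1 := Finset.mem_sdiff.1 hx
    refine ⟨h1.1, fun hB => h1.2 ?_⟩
    rw [hBkdef]
    exact Finset.mem_filter.2 ⟨h1.1, hB⟩
  have hcardsplit : ∀ k, (T k).card = (Ak k).card + (Bk k).card := by
    intro k
    have h1 : Bk k ⊆ T k := Finset.filter_subset _ _
    have h3 : (Ak k).card = (T k).card - (Bk k).card := Finset.card_sdiff_of_subset h1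
    have h2 := Finset.card_le_card h1
    omega
  -- ==================== case B ====================
  have stepB : ∀ k ∈ K, ((Bk k).card : ℝ) ≤
      ∑ e ∈ MST E, (if w e ≤ τf k then 4*W*(w e)*((2:ℝ)^k)⁻¹ else 0) := by
    intro k _
    have h2k : (0:ℝ) < (2:ℝ)^k := by positivity
    set Cball : X → Finset (X × X) := fun x =>
      (MST E).filter (fun e => w e ≤ τf k ∧ dist x e.1 ≤ Rf k ∧ dist x e.2 ≤ Rf k) with hCballdef
    have hres : ∀ x ∈ Bk k, (2:ℝ)^k/(4*W) ≤ ∑ e ∈ Cball x, w e := by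
      intro x hx
      rw [hBkdef, Finset.mem_filter] at hx
      obtain ⟨z, hzE, hch, hzd⟩ := hx.2
      have h1 := resB E (hτpos k) (by
        show 2*((2:ℝ)^k/(8*W)) ≤ (2:ℝ)^k/(2*W)
        rw [show 2*((2:ℝ)^k/(8*W)) = (2:ℝ)^k/(4*W) by ring]
        apply div_le_div_of_nonneg_left h2k.le (by positivity) (by linarith)) hch hzd
      refine le_trans ?_ h1
      have heq2 : Rf k - τf k = 3*(2:ℝ)^k/(8*W) := by
        simp only [hRdef, hτdef]
        field_simp
        ring
      rw [heq2, div_le_div_iff₀ (by positivity) (by positivity)]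
      nlinarith [h2k, hWpos]
    have hdisj : (↑(Bk k) : Set X).PairwiseDisjoint Cball := by
      intro x hx y hy hxy
      simp only [Function.onFun]
      rw [Finset.disjoint_left]
      intro e hex hey
      rw [hCballdef, Finset.mem_filter] at hex hey
      have hsepxy : 100*W^2*(2:ℝ)^k < dist x y := by
        apply hsep k x (by
          rw [hBkdef] at hx; exact Finset.filter_subset _ _ hx) y (by
          rw [hBkdef] at hy; exact Finset.filter_subset _ _ hy) hxy
      have : dist x y ≤ Rf k + Rf k :=
        (dist_triangle x e.1 y).trans (by
          rw [dist_comm e.1 y]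
          exact add_le_add hex.2.2.1 hey.2.2.1)
      simp only [hRdef] at this
      rw [← add_div] at this
      have hc : (2:ℝ)^k + (2:ℝ)^k ≤ 100*W^2*(2:ℝ)^k * (2*W) := by
        have h200 : (2:ℝ) ≤ 200*W^3 := by nlinarith [hWcube]
        nlinarith [mul_le_mul_of_nonneg_right h200 h2k.le]
      have := this.trans ((div_le_iff₀ (by positivity)).2 hc)
      linarith
    have hsum1 : ((Bk k).card : ℝ) * ((2:ℝ)^k/(4*W)) ≤
        ∑ e ∈ (MST E).filter (fun e => w e ≤ τf k), w e := by
      calc ((Bk k).card : ℝ) * ((2:ℝ)^k/(4*W)) = ∑ _x ∈ Bk k, ((2:ℝ)^k/(4*W)) := by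
            rw [Finset.sum_const, nsmul_eq_mul]
        _ ≤ ∑ x ∈ Bk k, ∑ e ∈ Cball x, w e := Finset.sum_le_sum hres
        _ = ∑ e ∈ (Bk k).biUnion Cball, w e := (Finset.sum_biUnion hdisj).symm
        _ ≤ ∑ e ∈ (MST E).filter (fun e => w e ≤ τf k), w e := by
            apply Finset.sum_le_sum_of_subset_of_nonneg
            · intro e he
              obtain ⟨x, _, hex⟩ := Finset.mem_biUnion.1 he
              rw [hCballdef, Finset.mem_filter] at hex
              exact Finset.mem_filter.2 ⟨hex.1, hex.2.1⟩
            · intro e _ _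
              exact dist_nonneg
    have hc4 : (0:ℝ) < (2:ℝ)^k/(4*W) := by positivity
    have h2 : ((Bk k).card : ℝ) ≤
        ∑ e ∈ (MST E).filter (fun e => w e ≤ τf k), (4*W*(w e)*((2:ℝ)^k)⁻¹) := by
      rw [← le_div_iff₀ hc4] at hsum1
      refine hsum1.trans (le_of_eq ?_)
      rw [div_div_eq_mul_div, Finset.sum_mul, Finset.sum_div]
      apply Finset.sum_congr rfl
      intro e _
      rw [div_eq_mul_inv]
      ring
    refine h2.trans (le_of_eq ?_)
    rw [Finset.sum_filter]
  -- per-edge weights are positive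
  have hwpos : ∀ e ∈ MST E, 0 < w e := by
    intro e he
    exact dist_pos.2 (MST_pairs he).2.2
  have hMSTcard : ((MST E).card : ℝ) ≤ (E.card : ℝ) := by
    have := MST_card hE
    exact_mod_cast Nat.le_of_succ_le this
  -- ==================== sum over k of case B ====================
  have sumB : ∑ k ∈ K, ((Bk k).card : ℝ) ≤ ((MST E).card : ℝ) := by
    calc ∑ k ∈ K, ((Bk k).card : ℝ)
        ≤ ∑ k ∈ K, ∑ e ∈ MST E, (if w e ≤ τf k then 4*W*(w e)*((2:ℝ)^k)⁻¹ else 0) :=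
          Finset.sum_le_sum stepB
      _ = ∑ e ∈ MST E, ∑ k ∈ K, (if w e ≤ τf k then 4*W*(w e)*((2:ℝ)^k)⁻¹ else 0) :=
          Finset.sum_comm
      _ ≤ ∑ _e ∈ MST E, (1:ℝ) := by
          apply Finset.sum_le_sum
          intro e he
          have hwe := hwpos e he
          have heq : ∑ k ∈ K, (if w e ≤ τf k then 4*W*(w e)*((2:ℝ)^k)⁻¹ else 0)
              = 4*W*(w e) * ∑ k ∈ K.filter (fun k => w e ≤ τf k), ((2:ℝ)^k)⁻¹ := by
            rw [← Finset.sum_filter, Finset.mul_sum]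
          rw [heq]
          have hgeo : ∑ k ∈ K.filter (fun k => w e ≤ τf k), ((2:ℝ)^k)⁻¹ ≤ 2/(8*W*(w e)) := by
            apply geom_bound (K.filter (fun k => w e ≤ τf k)).card _ _ rfl (by positivity)
            intro k hk
            have := (Finset.mem_filter.1 hk).2
            simp only [hτdef] at this
            rw [le_div_iff₀ (by positivity)] at this
            linarith
          calc 4*W*(w e) * ∑ k ∈ K.filter (fun k => w e ≤ τf k), ((2:ℝ)^k)⁻¹
              ≤ 4*W*(w e) * (2/(8*W*(w e))) := by
                apply mul_le_mul_of_nonneg_left hgeo (by positivity)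
            _ = 1 := by field_simp; ring
      _ = ((MST E).card : ℝ) := by simp
  -- ==================== case A ====================
  have stepA : ∀ k ∈ K, ((Ak k).card : ℝ) ≤
      2 * (((MST E).filter (fun e => τf k < w e ∧ w e ≤ W*(2:ℝ)^k)).card : ℝ) := by
    intro k hk
    have h2k : (0:ℝ) < (2:ℝ)^k := by positivity
    set P : X → Prop := fun x => ∃ e, e ∈ MST E ∧ (τf k < w e ∧ w e ≤ W*(2:ℝ)^k) ∧
      (ChainE E (τf k) x e.1 ∨ ChainE E (τf k) x e.2) with hPdef
    have hP : ∀ x ∈ Ak k, P x := by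
      intro x hx
      obtain ⟨hxT, hnB⟩ := hAkprop k x hx
      obtain ⟨y, hyE, hy1, hy2⟩ := hwit k hk x hxT
      have hxE : x ∈ E := hTE k hxT
      have hxy : x ≠ y := by
        intro h
        rw [h, dist_self] at hy1
        have : (0:ℝ) < (2:ℝ)^k/W := by positivity
        linarith
      have hnc : ¬ ChainE E (τf k) x y := by
        intro hch
        apply hnB
        refine ⟨y, hyE, hch, ?_⟩
        have hlt : Rf k < (2:ℝ)^k/W := by
          show (2:ℝ)^k/(2*W) < (2:ℝ)^k/W
          exact div_lt_div_of_pos_left h2k hWpos (by linarith)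
        linarith
      obtain ⟨e, he, hw, hch⟩ := caseA_edge E hxE hyE hxy hy2 hnc
      exact ⟨e, he, hw, hch⟩
    set Fk := (MST E).filter (fun e => τf k < w e ∧ w e ≤ W*(2:ℝ)^k) with hFkdef
    set f : X → (X × X) × Bool := fun x =>
      if h : P x then (Classical.choose h,
        if ChainE E (τf k) x (Classical.choose h).1 then true else false)
      else ((x0, x0), true) with hfdef
    have hmapsto : ∀ x ∈ Ak k, f x ∈ Fk ×ˢ (Finset.univ : Finset Bool) := by
      intro x hx
      have hPx := hP x hx
      simp only [hfdef, dif_pos hPx]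
      rw [Finset.mem_product]
      obtain ⟨he, hw, _⟩ := Classical.choose_spec hPx
      exact ⟨Finset.mem_filter.2 ⟨he, hw⟩, Finset.mem_univ _⟩
    have hinj : ((Ak k).card : ℝ) ≤ ((Fk ×ˢ (Finset.univ : Finset Bool)).card : ℝ) := by
      have hinjOn : Set.InjOn f ↑(Ak k) := by
        intro x hx y hy hfxy
        by_contra hxy
        have hPx := hP x (by simpa using hx)
        have hPy := hP y (by simpa using hy)
        simp only [hfdef, dif_pos hPx, dif_pos hPy, Prod.mk.injEq] at hfxy
        obtain ⟨hee, hbb⟩ := hfxy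
        obtain ⟨heM, hewin, hech⟩ := Classical.choose_spec hPx
        obtain ⟨heM', hewin', hech'⟩ := Classical.choose_spec hPy
        -- both x and y chain to a common endpoint of e
        have hcommon : ∃ p, ChainE E (τf k) x p ∧ ChainE E (τf k) y p := by
          by_cases hcx : ChainE E (τf k) x (Classical.choose hPx).1
          · have hbx : (if ChainE E (τf k) x (Classical.choose hPx).1 then true else false) = true := by
              simp [hcx]
            have hby : (if ChainE E (τf k) y (Classical.choose hPy).1 then true else false) = true := by
              rw [← hbb]; exact hbx
            have hcy : ChainE E (τf k) y (Classical.choose hPy).1 := by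
              by_contra hcon
              simp [hcon] at hby
            refine ⟨(Classical.choose hPx).1, hcx, ?_⟩
            rw [show Classical.choose hPx = Classical.choose hPy from hee]
            exact hcy
          · have hcx2 : ChainE E (τf k) x (Classical.choose hPx).2 := by
              rcases hech with h | h
              · exact absurd h hcx
              · exact h
            have hbx : (if ChainE E (τf k) x (Classical.choose hPx).1 then true else false) = false := by
              simp [hcx]
            have hby : (if ChainE E (τf k) y (Classical.choose hPy).1 then true else false) = false := by
              rw [← hbb]; exact hbx
            have hcy1 : ¬ ChainE E (τf k) y (Classical.choose hPy).1 := by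
              by_contra hcon
              simp [hcon] at hby
            have hcy : ChainE E (τf k) y (Classical.choose hPy).2 := by
              rcases hech' with h | h
              · exact absurd h hcy1
              · exact h
            refine ⟨(Classical.choose hPx).2, hcx2, ?_⟩
            rw [show Classical.choose hPx = Classical.choose hPy from hee]
            exact hcy
        obtain ⟨p, hxp, hyp⟩ := hcommon
        have hchxy : ChainE E (τf k) x y := chainE_trans hxp (chainE_symm hyp)
        have hxA := hAkprop k x (by simpa using hx)
        have hyA := hAkprop k y (by simpa using hy)
        apply hxA.2
        refine ⟨y, hTE k hyA.1, hchxy, ?_⟩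
        have hs := hsep k x hxA.1 y hyA.1 hxy
        have hR1 : Rf k ≤ (2:ℝ)^k := by
          show (2:ℝ)^k/(2*W) ≤ (2:ℝ)^k
          exact div_le_self h2k.le (by linarith)
        have hR2 : (2:ℝ)^k ≤ 100*W^2*(2:ℝ)^k := by nlinarith [hWsq, h2k]
        linarith
      exact_mod_cast Finset.card_le_card_of_injOn f hmapsto hinjOn
    refine hinj.trans (le_of_eq ?_)
    rw [Finset.card_product]
    push_cast
    simp [Finset.card_univ]
    ring
  -- ==================== sum over k of case A ====================
  set L : ℕ := ⌈8*W^2⌉₊ with hLdef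
  have hL : 8*W^2 ≤ (2:ℝ)^((L:ℤ)) := ceil_pow_bound _ (by positivity)
  have sumA : ∑ k ∈ K, ((Ak k).card : ℝ) ≤ 2*((L:ℝ)+1) * ((MST E).card : ℝ) := by
    calc ∑ k ∈ K, ((Ak k).card : ℝ)
        ≤ ∑ k ∈ K, 2 * (((MST E).filter (fun e => τf k < w e ∧ w e ≤ W*(2:ℝ)^k)).card : ℝ) :=
          Finset.sum_le_sum stepA
      _ = 2 * ∑ k ∈ K, (((MST E).filter (fun e => τf k < w e ∧ w e ≤ W*(2:ℝ)^k)).card : ℝ) := by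
          rw [Finset.mul_sum]
      _ = 2 * ∑ e ∈ MST E, ((K.filter (fun k => τf k < w e ∧ w e ≤ W*(2:ℝ)^k)).card : ℝ) := by
          congr 1
          have : ∀ k ∈ K, (((MST E).filter (fun e => τf k < w e ∧ w e ≤ W*(2:ℝ)^k)).card : ℝ)
              = ∑ e ∈ MST E, (if τf k < w e ∧ w e ≤ W*(2:ℝ)^k then (1:ℝ) else 0) := by
            intro k _
            rw [Finset.card_filter]
            push_cast
            rfl
          rw [Finset.sum_congr rfl this, Finset.sum_comm]
          apply Finset.sum_congr rfl
          intro e _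
          rw [Finset.card_filter]
          push_cast
          rfl
      _ ≤ 2 * ∑ _e ∈ MST E, ((L:ℝ)+1) := by
          apply mul_le_mul_of_nonneg_left _ (by norm_num)
          apply Finset.sum_le_sum
          intro e he
          have := window_bound K W (w e) (by linarith) (hwpos e he) L hL
          simp only [hτdef]
          exact this
      _ = 2*((L:ℝ)+1) * ((MST E).card : ℝ) := by
          rw [Finset.sum_const, nsmul_eq_mul]
          ring
  -- ==================== combine ====================
  have hLbound : (L:ℝ) ≤ 8*W^2 + 1 := by
    rw [hLdef]
    have := Nat.ceil_lt_add_one (show (0:ℝ) ≤ 8*W^2 by positivity)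
    linarith
  have htot : ∑ k ∈ K, ((T k).card : ℝ) = ∑ k ∈ K, (((Ak k).card : ℝ) + ((Bk k).card : ℝ)) := by
    apply Finset.sum_congr rfl
    intro k _
    rw [hcardsplit k]
    push_cast
    ring
  rw [htot, Finset.sum_add_distrib]
  have hW2 : (5:ℝ) ≤ W^2 := by nlinarith
  calc ∑ k ∈ K, ((Ak k).card : ℝ) + ∑ k ∈ K, ((Bk k).card : ℝ)
      ≤ 2*((L:ℝ)+1) * ((MST E).card : ℝ) + ((MST E).card : ℝ) := add_le_add sumA sumB
    _ ≤ (2*(8*W^2+2)+1) * ((MST E).card : ℝ) := by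
        have hMge : (0:ℝ) ≤ ((MST E).card : ℝ) := by positivity
        nlinarith [hLbound, hMge]
    _ ≤ (2*(8*W^2+2)+1) * (E.card : ℝ) := by
        apply mul_le_mul_of_nonneg_left hMSTcard (by nlinarith)
    _ ≤ 17*W^2 * E.card := by
        have : (0:ℝ) ≤ (E.card : ℝ) := by positivity
        nlinarith


end S9

/-- The constant `c_G = 10⁻⁶`. -/
def cG : ℝ := 1 / 1000000

/-- A cube `Q = {a} + (−δ, δ]ⁿ` with center `c = a` and half-sidelength `d = δ`
(so the sidelength of `Q` is `2d`). -/
structure Cube (n : ℕ) where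
  c : Fin n → ℝ
  d : ℝ

namespace Cube

/-- The cube as a subset of `ℝⁿ`. -/
def toSet {n : ℕ} (Q : Cube n) : Set (Fin n → ℝ) :=
  {x | ∀ i, Q.c i - Q.d < x i ∧ x i ≤ Q.c i + Q.d}

/-- The sidelength `δ_Q` of a cube. -/
def side {n : ℕ} (Q : Cube n) : ℝ := 2 * Q.d

/-- The dilate `tQ`: same center, sidelength `t·δ_Q`. -/
def scale {n : ℕ} (t : ℝ) (Q : Cube n) : Cube n := ⟨Q.c, t * Q.d⟩

/-- `Q` is a dyadic cube `∏ᵢ (jᵢ·2^k, (jᵢ+1)·2^k]`. -/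
def Dyadic {n : ℕ} (Q : Cube n) : Prop :=
  ∃ k : ℤ, ∃ j : Fin n → ℤ, Q.d = (2 : ℝ) ^ k / 2 ∧
    ∀ i, Q.c i = ((j i : ℝ) + 1 / 2) * (2 : ℝ) ^ k

end Cube

/-- The CZ-decomposition setting: a partition `CZ` of `ℝⁿ` into dyadic cubes with
good geometry, and a finite set `E` with `#E ≥ 2` and `#(E ∩ 9Q) ≥ 2` for all `Q ∈ CZ`. -/
structure CZSetting (n : ℕ) where
  CZ : Set (Cube n)
  E : Finset (Fin n → ℝ)
  dyadic : ∀ Q ∈ CZ, Q.Dyadic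
  partition : ∀ x : Fin n → ℝ, ∃! Q, Q ∈ CZ ∧ x ∈ Q.toSet
  goodGeom : ∀ Q ∈ CZ, ∀ Q' ∈ CZ,
    ((Q.scale (1 + 10 * cG)).toSet ∩ (Q'.scale (1 + 10 * cG)).toSet).Nonempty →
      Q.side / 64 ≤ Q'.side ∧ Q'.side ≤ 64 * Q.side
  two_le_card : 2 ≤ E.card
  dense : ∀ Q ∈ CZ, 2 ≤ ((E : Set (Fin n → ℝ)) ∩ (Q.scale 9).toSet).ncard

/-- `S` is a cluster of `E` (with parameter `A`): `S ⊆ E`, `#S ≥ 2` and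
`dist(S, E∖S) ≥ A³·diam S` (with the convention `dist(S,∅) = +∞`). -/
def IsCluster {n : ℕ} (A : ℝ) (E S : Finset (Fin n → ℝ)) : Prop :=
  S ⊆ E ∧ 2 ≤ S.card ∧
  ∀ x ∈ S, ∀ y ∈ E \ S, A ^ 3 * Metric.diam (S : Set (Fin n → ℝ)) ≤ dist x y

/-- `Q` is interstellar: `diam(A¹⁰Q ∩ E) ≤ A⁻¹⁰·δ_Q` and `(1+3c_G)Q ∩ E = ∅`. -/
def Interstellar {n : ℕ} (A : ℝ) (E : Finset (Fin n → ℝ)) (Q : Cube n) : Prop :=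
  Metric.diam ((Q.scale (A ^ 10)).toSet ∩ (E : Set (Fin n → ℝ))) ≤ (A ^ 10)⁻¹ * Q.side ∧
  (Q.scale (1 + 3 * cG)).toSet ∩ (E : Set (Fin n → ℝ)) = ∅

/-- The halo `H(S)` of a cluster `S` with representative `xS`:
`{x : A·diam S < |x − xS| < A⁻¹·dist(S, E∖S)}` (with `dist(S,∅) = +∞`). -/
def Halo {n : ℕ} (A : ℝ) (E S : Finset (Fin n → ℝ)) (xS : Fin n → ℝ) :
    Set (Fin n → ℝ) :=
  {x | A * Metric.diam (S : Set (Fin n → ℝ)) < dist x xS ∧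
    ∀ y ∈ S, ∀ z ∈ E \ S, A * dist x xS < dist y z}

/-- `Q` is a keystone cube of `CZ`: every `Q' ∈ CZ` meeting `100Q` is at least as big. -/
def Keystone {n : ℕ} (CZ : Set (Cube n)) (Q : Cube n) : Prop :=
  Q ∈ CZ ∧ ∀ Q' ∈ CZ, (Q'.toSet ∩ (Q.scale 100).toSet).Nonempty → Q.side ≤ Q'.side

namespace S9G

variable {n : ℕ}


/-- a maximal separated net -/
theorem exists_net {X : Type*} [MetricSpace X] (F : Finset X) (r : ℝ) (hr : 0 ≤ r) :
    ∃ T ⊆ F, (∀ x ∈ T, ∀ y ∈ T, x ≠ y → r < dist x y) ∧ (∀ x ∈ F, ∃ t ∈ T, dist x t ≤ r) := by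
  classical
  induction F using Finset.strongInduction with
  | _ F ih =>
    rcases F.eq_empty_or_nonempty with rfl | ⟨x0, hx0⟩
    · exact ⟨∅, subset_rfl, by simp, by simp⟩
    · set F' := F.filter (fun x => r < dist x0 x) with hF'
      have hss : F' ⊂ F := by
        rw [Finset.ssubset_iff_of_subset (Finset.filter_subset _ _)]
        refine ⟨x0, hx0, ?_⟩
        intro hmem
        rw [Finset.mem_filter, dist_self] at hmem
        linarith [hmem.2]
      obtain ⟨T', hT'sub, hT'sep, hT'cov⟩ := ih F' hss
      refine ⟨insert x0 T', ?_, ?_, ?_⟩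
      · intro t ht
        rcases Finset.mem_insert.1 ht with rfl | ht
        · exact hx0
        · exact Finset.filter_subset _ _ (hT'sub ht)
      · intro x hx y hy hxy
        rcases Finset.mem_insert.1 hx with hx0e | hxT
        · rcases Finset.mem_insert.1 hy with hy0e | hyT
          · exact absurd (hx0e.trans hy0e.symm) hxy
          · rw [hx0e]
            exact (Finset.mem_filter.1 (hT'sub hyT)).2
        · rcases Finset.mem_insert.1 hy with hy0e | hyT
          · rw [hy0e, dist_comm]
            exact (Finset.mem_filter.1 (hT'sub hxT)).2
          · exact hT'sep x hxT y hyT hxy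
      · intro x hx
        by_cases hd : r < dist x0 x
        · obtain ⟨t, ht, htd⟩ := hT'cov x (by rw [hF', Finset.mem_filter]; exact ⟨hx, hd⟩)
          exact ⟨t, Finset.mem_insert_of_mem ht, htd⟩
        · exact ⟨x0, Finset.mem_insert_self _ _, by rw [dist_comm]; linarith [not_lt.1 hd]⟩

-- cube basic facts
@[simp] theorem scale_c {Q : Cube n} {t : ℝ} : (Q.scale t).c = Q.c := rfl
@[simp] theorem scale_d {Q : Cube n} {t : ℝ} : (Q.scale t).d = t * Q.d := rfl
theorem mem_scale_iff {Q : Cube n} {t : ℝ} {x : Fin n → ℝ} :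
    x ∈ (Q.scale t).toSet ↔ ∀ i, Q.c i - t * Q.d < x i ∧ x i ≤ Q.c i + t * Q.d := Iff.rfl

theorem dist_center_le {Q : Cube n} {t : ℝ} (ht : 0 ≤ t) (hd : 0 ≤ Q.d) {x : Fin n → ℝ}
    (hx : x ∈ (Q.scale t).toSet) : dist x Q.c ≤ t * Q.d := by
  rw [dist_pi_le_iff (by positivity)]
  intro i
  obtain ⟨h1, h2⟩ := hx i
  simp only [scale_c, scale_d] at h1 h2
  rw [Real.dist_eq, abs_le]
  constructor <;> linarith

theorem dist_pair_le {Q : Cube n} {t : ℝ} (ht : 0 ≤ t) (hd : 0 ≤ Q.d) {x y : Fin n → ℝ}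
    (hx : x ∈ (Q.scale t).toSet) (hy : y ∈ (Q.scale t).toSet) : dist x y ≤ t * Q.side := by
  calc dist x y ≤ dist x Q.c + dist Q.c y := dist_triangle _ _ _
    _ ≤ t * Q.d + t * Q.d := add_le_add (dist_center_le ht hd hx)
        (by rw [dist_comm]; exact dist_center_le ht hd hy)
    _ = t * Q.side := by rw [Cube.side]; ring

theorem scale_mono {Q : Cube n} {t t' : ℝ} (h : t ≤ t') (hd : 0 ≤ Q.d) :
    (Q.scale t).toSet ⊆ (Q.scale t').toSet := by
  intro x hx i
  obtain ⟨h1, h2⟩ := hx i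
  simp only [scale_c, scale_d] at h1 h2
  have h3 : t * Q.d ≤ t' * Q.d := mul_le_mul_of_nonneg_right h hd
  refine ⟨?_, ?_⟩ <;> simp only [scale_c, scale_d] <;> linarith

theorem toSet_scale_one {Q : Cube n} : (Q.scale 1).toSet = Q.toSet := by
  unfold Cube.toSet Cube.scale
  simp

open Classical in
def expn {n : ℕ} (Q : Cube n) : ℤ :=
  if h : ∃ k : ℤ, Q.d = (2 : ℝ) ^ k / 2 then Classical.choose h else 0

theorem expn_spec {Q : Cube n} (hQ : Q.Dyadic) : Q.d = (2:ℝ) ^ (expn Q) / 2 := by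
  obtain ⟨k, j, hd, hc⟩ := hQ
  have h : ∃ k : ℤ, Q.d = (2 : ℝ) ^ k / 2 := ⟨k, hd⟩
  rw [expn, dif_pos h]
  exact Classical.choose_spec h

theorem expn_eq {Q : Cube n} (hQ : Q.Dyadic) {k : ℤ} (hd : Q.d = (2:ℝ)^k/2) : expn Q = k := by
  have h1 := expn_spec hQ
  have : (2:ℝ) ^ (expn Q) = (2:ℝ) ^ k := by
    rw [h1] at hd
    linarith
  exact zpow_right_injective₀ (by norm_num) (by norm_num) this

theorem side_eq {Q : Cube n} (hQ : Q.Dyadic) : Q.side = (2:ℝ) ^ (expn Q) := by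
  rw [Cube.side, expn_spec hQ]
  ring

theorem d_pos {Q : Cube n} (hQ : Q.Dyadic) : 0 < Q.d := by
  rw [expn_spec hQ]; positivity

open Classical in
def jvec {n : ℕ} (Q : Cube n) : Fin n → ℤ :=
  if h : ∃ j : Fin n → ℤ, ∀ i, Q.c i = ((j i : ℝ) + 1 / 2) * (2 : ℝ) ^ (expn Q)
  then Classical.choose h else 0

theorem jvec_spec {Q : Cube n} (hQ : Q.Dyadic) :
    ∀ i, Q.c i = ((jvec Q i : ℝ) + 1 / 2) * (2 : ℝ) ^ (expn Q) := by
  obtain ⟨k, j, hd, hc⟩ := hQ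
  have hk : expn Q = k := expn_eq ⟨k, j, hd, hc⟩ hd
  have h : ∃ j : Fin n → ℤ, ∀ i, Q.c i = ((j i : ℝ) + 1 / 2) * (2 : ℝ) ^ (expn Q) :=
    ⟨j, fun i => by rw [hk]; exact hc i⟩
  rw [jvec, dif_pos h]
  exact Classical.choose_spec h

theorem cube_ext {Q Q' : Cube n} (hc : Q.c = Q'.c) (hd : Q.d = Q'.d) : Q = Q' := by
  cases Q; cases Q'; simp_all

theorem cube_eq_of_data {Q Q' : Cube n} (hQ : Q.Dyadic) (hQ' : Q'.Dyadic)
    (he : expn Q = expn Q') (hj : jvec Q = jvec Q') : Q = Q' := by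
  apply cube_ext
  · funext i
    rw [jvec_spec hQ i, jvec_spec hQ' i, he, hj]
  · rw [expn_spec hQ, expn_spec hQ', he]

/-- counting dyadic cubes of a given size near a point -/
theorem cube_count (CZsub : Finset (Cube n)) (k : ℤ) (t : Fin n → ℝ) (ρ : ℝ) (hρ : 0 ≤ ρ)
    (hQs : ∀ Q ∈ CZsub, Q.Dyadic ∧ expn Q = k ∧ dist Q.c t ≤ ρ * (2:ℝ)^k) :
    (CZsub.card : ℝ) ≤ (2*(⌈ρ⌉₊ + 2) + 1)^n := by
  classical
  set M : ℕ := ⌈ρ⌉₊ + 2 with hM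
  set lo : Fin n → ℤ := fun i => ⌊t i / (2:ℝ)^k⌋ - M with hlo
  set hi : Fin n → ℤ := fun i => ⌊t i / (2:ℝ)^k⌋ + M with hhi
  have h2k : (0:ℝ) < (2:ℝ)^k := by positivity
  have hmaps : ∀ Q ∈ CZsub, jvec Q ∈ Finset.Icc lo hi := by
    intro Q hQ
    obtain ⟨hdy, hke, hdist⟩ := hQs Q hQ
    rw [Finset.mem_Icc]
    constructor <;> (rw [Pi.le_def]; intro i)
    · -- lo i ≤ jvec Q i
      have hci := jvec_spec hdy i
      rw [hke] at hci
      have hdi : |Q.c i - t i| ≤ ρ * (2:ℝ)^k := by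
        have := (dist_pi_le_iff (by positivity)).1 hdist i
        rwa [Real.dist_eq] at this
      have h1 : ((jvec Q i : ℝ) + 1/2) * (2:ℝ)^k ≥ t i - ρ * (2:ℝ)^k := by
        rw [← hci]
        have := (abs_le.1 hdi).1
        linarith
      have h2 : t i / (2:ℝ)^k - ρ ≤ (jvec Q i : ℝ) + 1/2 := by
        have h4 : (t i - ρ * (2:ℝ)^k)/(2:ℝ)^k ≤ (jvec Q i : ℝ) + 1/2 :=
          (div_le_iff₀ h2k).2 (by linarith)
        have h5 : (t i - ρ * (2:ℝ)^k)/(2:ℝ)^k = t i / (2:ℝ)^k - ρ := by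
          rw [sub_div, mul_div_cancel_right₀ _ (ne_of_gt h2k)]
        rw [h5] at h4
        exact h4
      have hfl : (⌊t i / (2:ℝ)^k⌋ : ℝ) ≤ t i / (2:ℝ)^k := Int.floor_le _
      have hceil : ρ ≤ (⌈ρ⌉₊:ℝ) := Nat.le_ceil ρ
      show ⌊t i / (2:ℝ)^k⌋ - (M:ℤ) ≤ jvec Q i
      have hcast : ((⌊t i / (2:ℝ)^k⌋ - (M:ℤ) : ℤ) : ℝ) ≤ ((jvec Q i : ℤ) : ℝ) := by
        push_cast [hM]
        linarith
      exact_mod_cast hcast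
    · have hci := jvec_spec hdy i
      rw [hke] at hci
      have hdi : |Q.c i - t i| ≤ ρ * (2:ℝ)^k := by
        have := (dist_pi_le_iff (by positivity)).1 hdist i
        rwa [Real.dist_eq] at this
      have h1 : ((jvec Q i : ℝ) + 1/2) * (2:ℝ)^k ≤ t i + ρ * (2:ℝ)^k := by
        rw [← hci]
        have := (abs_le.1 hdi).2
        linarith
      have h2 : (jvec Q i : ℝ) + 1/2 ≤ t i / (2:ℝ)^k + ρ := by
        have h4 : (jvec Q i : ℝ) + 1/2 ≤ (t i + ρ * (2:ℝ)^k)/(2:ℝ)^k :=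
          (le_div_iff₀ h2k).2 (by linarith)
        have h5 : (t i + ρ * (2:ℝ)^k)/(2:ℝ)^k = t i / (2:ℝ)^k + ρ := by
          rw [add_div, mul_div_cancel_right₀ _ (ne_of_gt h2k)]
        rw [h5] at h4
        exact h4
      have hfl : t i / (2:ℝ)^k < ⌊t i / (2:ℝ)^k⌋ + 1 := Int.lt_floor_add_one _
      have hceil : ρ ≤ (⌈ρ⌉₊:ℝ) := Nat.le_ceil ρ
      show jvec Q i ≤ ⌊t i / (2:ℝ)^k⌋ + (M:ℤ)
      have hcast : ((jvec Q i : ℤ) : ℝ) ≤ ((⌊t i / (2:ℝ)^k⌋ + (M:ℤ) : ℤ) : ℝ) := by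
        push_cast [hM]
        linarith
      exact_mod_cast hcast
  have hinj : Set.InjOn jvec (CZsub : Set (Cube n)) := by
    intro Q hQ Q' hQ' hj
    exact cube_eq_of_data (hQs Q (by simpa using hQ)).1 (hQs Q' (by simpa using hQ')).1
      (by rw [(hQs Q (by simpa using hQ)).2.1, (hQs Q' (by simpa using hQ')).2.1]) hj
  have hcard := Finset.card_le_card_of_injOn jvec hmaps hinj
  calc (CZsub.card : ℝ) ≤ ((Finset.Icc lo hi).card : ℝ) := by exact_mod_cast hcard
    _ = (2*(⌈ρ⌉₊ + 2) + 1)^n := by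
        rw [Pi.card_Icc]
        have hper : ∀ i : Fin n, (Finset.Icc (lo i) (hi i)).card = 2*M + 1 := by
          intro i
          rw [Int.card_Icc]
          show ((⌊t i / (2:ℝ)^k⌋ + (M:ℤ)) + 1 - (⌊t i / (2:ℝ)^k⌋ - (M:ℤ))).toNat = 2*M+1
          have heq : (⌊t i / (2:ℝ)^k⌋ + (M:ℤ)) + 1 - (⌊t i / (2:ℝ)^k⌋ - (M:ℤ)) = 2*(M:ℤ)+1 := by
            ring
          rw [heq]
          omega
        rw [Finset.prod_congr rfl (fun i _ => hper i), Finset.prod_const, Finset.card_univ,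
          Fintype.card_fin]
        push_cast [hM]
        ring

end S9G

/-- **Lemma 5.3 (Lemma A): the number of non-interstellar CZ cubes is at most `C(A)·N`.** -/
theorem statement9 (n : ℕ) (hn : 1 ≤ n) :
    ∃ A₀ : ℝ, 1 ≤ A₀ ∧ ∀ A : ℝ, A₀ ≤ A →
      ∃ C : ℝ, 0 < C ∧
        ∀ S : CZSetting n,
          {Q ∈ S.CZ | ¬ Interstellar A S.E Q}.Finite ∧
          ({Q ∈ S.CZ | ¬ Interstellar A S.E Q}.ncard : ℝ) ≤ C * S.E.card := by
  classical
  refine ⟨2, by norm_num, fun A hA => ?_⟩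
  have hA1 : (1:ℝ) ≤ A := by linarith
  have hA0 : (0:ℝ) < A := by linarith
  set W : ℝ := A ^ 10 with hWdef
  have hW : (1024:ℝ) ≤ W := by
    rw [hWdef]
    calc (1024:ℝ) = 2^10 := by norm_num
      _ ≤ A^10 := by gcongr
  have hWpos : (0:ℝ) < W := by linarith
  set C1 : ℝ := ((2*(⌈(101*W^2 : ℝ)⌉₊ + 2) + 1)^n : ℝ) with hC1def
  set C : ℝ := C1 * (17*W^2) + 13 * 7^n with hCdef
  have hC1pos : 0 < C1 := by rw [hC1def]; positivity
  have hCpos : 0 < C := by rw [hCdef]; positivity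
  refine ⟨C, hCpos, fun S => ?_⟩
  set E := S.E with hEdef
  set Xk : ℤ → Finset (Fin n → ℝ) := fun k =>
    E.filter (fun x => ∃ y ∈ E, (2:ℝ)^k / W < dist x y ∧ dist x y ≤ W * (2:ℝ)^k) with hXkdef
  have hnet : ∀ k : ℤ, ∃ T ⊆ Xk k,
      (∀ x ∈ T, ∀ y ∈ T, x ≠ y → 100*W^2*(2:ℝ)^k < dist x y) ∧
      (∀ x ∈ Xk k, ∃ t ∈ T, dist x t ≤ 100*W^2*(2:ℝ)^k) :=
    fun k => S9G.exists_net (Xk k) (100*W^2*(2:ℝ)^k) (by positivity)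
  choose Tf hT1 hT2 hT3 using hnet
  have key : ∀ F : Finset (Cube n), (∀ Q ∈ F, Q ∈ S.CZ ∧ ¬ Interstellar A E Q) →
      (F.card : ℝ) ≤ C * E.card := by
    intro F hF
    set F2 := F.filter (fun Q => ((Q.scale (1+3*cG)).toSet ∩ (E : Set (Fin n → ℝ))).Nonempty)
      with hF2def
    set F1 := F \ F2 with hF1def
    -- ================= type 1 =================
    have hQ1 : ∀ Q ∈ F1, Q.Dyadic ∧
        ∃ u ∈ Xk (S9G.expn Q), dist Q.c u ≤ W * (2:ℝ)^(S9G.expn Q) := by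
      intro Q hQmem
      have hQF : Q ∈ F := Finset.sdiff_subset hQmem
      obtain ⟨hQCZ, hQni⟩ := hF Q hQF
      have hdy : Q.Dyadic := S.dyadic Q hQCZ
      have hdpos : 0 < Q.d := S9G.d_pos hdy
      have hside : Q.side = (2:ℝ)^(S9G.expn Q) := S9G.side_eq hdy
      have h2k : (0:ℝ) < (2:ℝ)^(S9G.expn Q) := by positivity
      have hne : ((Q.scale (1+3*cG)).toSet ∩ (E : Set (Fin n → ℝ))) = ∅ := by
        by_contra hcon
        have hmem2 : Q ∈ F2 := Finset.mem_filter.2 ⟨hQF, Set.nonempty_iff_ne_empty.2 hcon⟩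
        exact (Finset.mem_sdiff.1 hQmem).2 hmem2
      have hdiam : ¬ (Metric.diam ((Q.scale (A ^ 10)).toSet ∩ (E : Set (Fin n → ℝ))) ≤
          (A ^ 10)⁻¹ * Q.side) := by
        intro hd
        exact hQni ⟨hd, hne⟩
      have hpair : ∃ u ∈ (Q.scale (A^10)).toSet ∩ (E : Set (Fin n → ℝ)),
          ∃ v ∈ (Q.scale (A^10)).toSet ∩ (E : Set (Fin n → ℝ)),
          (A^10)⁻¹ * Q.side < dist u v := by
        by_contra hcon
        push_neg at hcon
        exact hdiam (Metric.diam_le_of_forall_dist_le (by rw [hside]; positivity)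
          (fun u hu v hv => hcon u hu v hv))
      obtain ⟨u, hu, v, hv, huv⟩ := hpair
      have hA10pos : (0:ℝ) < A^10 := by positivity
      have hlow : (A ^ 10)⁻¹ * Q.side = (2:ℝ)^(S9G.expn Q) / W := by
        rw [hside, hWdef, inv_mul_eq_div]
      have hup : dist u v ≤ W * (2:ℝ)^(S9G.expn Q) := by
        have hh := S9G.dist_pair_le (Q := Q) (t := A^10) hA10pos.le hdpos.le hu.1 hv.1
        rw [hside, ← hWdef] at hh
        exact hh
      refine ⟨hdy, u, ?_, ?_⟩
      · rw [hXkdef]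
        refine Finset.mem_filter.2 ⟨hu.2, v, hv.2, ?_, hup⟩
        rw [← hlow]
        exact huv
      · have hh := S9G.dist_center_le (Q := Q) (t := A^10) hA10pos.le hdpos.le hu.1
        rw [dist_comm]
        calc dist u Q.c ≤ A^10 * Q.d := hh
          _ ≤ W * (2:ℝ)^(S9G.expn Q) := by
              rw [hWdef]
              have : Q.d ≤ (2:ℝ)^(S9G.expn Q) := by
                rw [S9G.expn_spec hdy]
                linarith [h2k]
              nlinarith [hA10pos, this, hdpos]
    have hbound1 : (F1.card : ℝ) ≤ C1 * (17*W^2) * E.card := by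
      set uOf : Cube n → (Fin n → ℝ) := fun Q =>
        if h : ∃ u ∈ Xk (S9G.expn Q), dist Q.c u ≤ W * (2:ℝ)^(S9G.expn Q)
        then Classical.choose h else Q.c with huOfdef
      have huOf : ∀ Q ∈ F1, uOf Q ∈ Xk (S9G.expn Q) ∧
          dist Q.c (uOf Q) ≤ W * (2:ℝ)^(S9G.expn Q) := by
        intro Q hQ
        obtain ⟨-, hex⟩ := hQ1 Q hQ
        rw [huOfdef]
        simp only [dif_pos hex]
        obtain ⟨h1, h2⟩ := Classical.choose_spec hex
        exact ⟨h1, h2⟩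
      set tOf : Cube n → (Fin n → ℝ) := fun Q =>
        if h : ∃ t ∈ Tf (S9G.expn Q), dist (uOf Q) t ≤ 100*W^2*(2:ℝ)^(S9G.expn Q)
        then Classical.choose h else uOf Q with htOfdef
      have htOf : ∀ Q ∈ F1, tOf Q ∈ Tf (S9G.expn Q) ∧
          dist Q.c (tOf Q) ≤ 101*W^2*(2:ℝ)^(S9G.expn Q) := by
        intro Q hQ
        obtain ⟨hu1, hu2⟩ := huOf Q hQ
        have hex : ∃ t ∈ Tf (S9G.expn Q), dist (uOf Q) t ≤ 100*W^2*(2:ℝ)^(S9G.expn Q) :=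
          hT3 _ _ hu1
        rw [htOfdef]
        simp only [dif_pos hex]
        obtain ⟨h1, h2⟩ := Classical.choose_spec hex
        refine ⟨h1, ?_⟩
        have h2kpos : (0:ℝ) < (2:ℝ)^(S9G.expn Q) := by positivity
        calc dist Q.c (Classical.choose hex)
            ≤ dist Q.c (uOf Q) + dist (uOf Q) (Classical.choose hex) := dist_triangle _ _ _
          _ ≤ W * (2:ℝ)^(S9G.expn Q) + 100*W^2*(2:ℝ)^(S9G.expn Q) := add_le_add hu2 h2
          _ ≤ 101*W^2*(2:ℝ)^(S9G.expn Q) := by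
              have hWW : W ≤ W^2 := by nlinarith [hW]
              nlinarith [mul_le_mul_of_nonneg_right hWW h2kpos.le]
      set K := F1.image S9G.expn with hKdef
      have hfib1 : F1.card = ∑ k ∈ K, (F1.filter (fun Q => S9G.expn Q = k)).card :=
        Finset.card_eq_sum_card_fiberwise (fun Q hQ => Finset.mem_image_of_mem _ hQ)
      have hperk : ∀ k ∈ K, ((F1.filter (fun Q => S9G.expn Q = k)).card : ℝ) ≤
          C1 * (Tf k).card := by
        intro k hk
        set F1k := F1.filter (fun Q => S9G.expn Q = k) with hF1kdef
        have hfib2 : F1k.card = ∑ t ∈ Tf k, (F1k.filter (fun Q => tOf Q = t)).card := by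
          apply Finset.card_eq_sum_card_fiberwise
          intro Q hQ
          rw [Finset.mem_coe, Finset.mem_filter] at hQ
          have hh := (htOf Q hQ.1).1
          rw [hQ.2] at hh
          exact hh
        have hpert : ∀ t ∈ Tf k, ((F1k.filter (fun Q => tOf Q = t)).card : ℝ) ≤ C1 := by
          intro t ht
          rw [hC1def]
          apply S9G.cube_count _ k t (101*W^2) (by positivity)
          intro Q hQ
          rw [Finset.mem_filter] at hQ
          obtain ⟨hQ1k, hQt⟩ := hQ
          rw [hF1kdef, Finset.mem_filter] at hQ1k
          refine ⟨(hQ1 Q hQ1k.1).1, hQ1k.2, ?_⟩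
          have hh := (htOf Q hQ1k.1).2
          rw [hQt, hQ1k.2] at hh
          exact hh
        calc (F1k.card : ℝ) = ∑ t ∈ Tf k, ((F1k.filter (fun Q => tOf Q = t)).card : ℝ) := by
              rw [hfib2]; push_cast; rfl
          _ ≤ ∑ _t ∈ Tf k, C1 := Finset.sum_le_sum hpert
          _ = C1 * (Tf k).card := by rw [Finset.sum_const, nsmul_eq_mul]; ring
      have hcount := S9.counting W hW E K Tf
        (fun k => (hT1 k).trans (Finset.filter_subset _ _))
        hT2
        (fun k _ x hx => (Finset.mem_filter.1 ((hT1 k) hx)).2)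
      calc (F1.card : ℝ) = ∑ k ∈ K, ((F1.filter (fun Q => S9G.expn Q = k)).card : ℝ) := by
            rw [hfib1]; push_cast; rfl
        _ ≤ ∑ k ∈ K, C1 * (Tf k).card := Finset.sum_le_sum hperk
        _ = C1 * ∑ k ∈ K, ((Tf k).card : ℝ) := by rw [Finset.mul_sum]
        _ ≤ C1 * (17*W^2 * E.card) := mul_le_mul_of_nonneg_left hcount hC1pos.le
        _ = C1 * (17*W^2) * E.card := by ring
    -- ================= type 2 =================
    have hbound2 : (F2.card : ℝ) ≤ 13 * 7^n * E.card := by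
      set xOf : Cube n → (Fin n → ℝ) := fun Q =>
        if h : ((Q.scale (1+3*cG)).toSet ∩ (E : Set (Fin n → ℝ))).Nonempty
        then Classical.choose h else (fun _ => 0) with hxOfdef
      set cubeAt : (Fin n → ℝ) → Cube n := fun x => Classical.choose (S.partition x).exists
        with hcubeAtdef
      have hcubeAt : ∀ x, cubeAt x ∈ S.CZ ∧ x ∈ (cubeAt x).toSet := fun x =>
        Classical.choose_spec (S.partition x).exists
      set m0 : (Fin n → ℝ) → ℤ := fun x => S9G.expn (cubeAt x) with hm0def
      have hxOf : ∀ Q ∈ F2, xOf Q ∈ (Q.scale (1+3*cG)).toSet ∧ xOf Q ∈ E := by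
        intro Q hQ
        have hne := (Finset.mem_filter.1 hQ).2
        rw [hxOfdef]
        simp only [dif_pos hne]
        obtain ⟨h1, h2⟩ := Classical.choose_spec hne
        exact ⟨h1, h2⟩
      have haux : ∀ a b : ℤ, (2:ℝ)^a ≤ 64 * (2:ℝ)^b → a ≤ b + 6 := by
        intro a b hab
        have h64 : ((2:ℝ))^((6:ℤ)) = 64 := by norm_num
        have h2 : (2:ℝ)^a ≤ (2:ℝ)^(b+6) := by
          rw [zpow_add₀ (by norm_num : (2:ℝ) ≠ 0), h64]
          linarith
        exact (zpow_le_zpow_iff_right₀ (by norm_num : (1:ℝ) < 2)).1 h2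
      have hprop : ∀ Q ∈ F2, Q.Dyadic ∧ xOf Q ∈ E ∧
          S9G.expn Q - m0 (xOf Q) ∈ Finset.Icc (-6 : ℤ) 6 ∧
          dist Q.c (xOf Q) ≤ 1 * (2:ℝ)^(S9G.expn Q) := by
        intro Q hQ
        have hQF : Q ∈ F := Finset.filter_subset _ _ hQ
        obtain ⟨hQCZ, -⟩ := hF Q hQF
        have hdy : Q.Dyadic := S.dyadic Q hQCZ
        have hdpos : 0 < Q.d := S9G.d_pos hdy
        obtain ⟨hx1, hx2⟩ := hxOf Q hQ
        have hx1' : xOf Q ∈ (Q.scale (1+10*cG)).toSet :=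
          S9G.scale_mono (t := 1+3*cG) (t' := 1+10*cG) (by norm_num [cG]) hdpos.le hx1
        obtain ⟨hQ0CZ, hxQ0⟩ := hcubeAt (xOf Q)
        have hdy0 : (cubeAt (xOf Q)).Dyadic := S.dyadic _ hQ0CZ
        have hd0pos : 0 < (cubeAt (xOf Q)).d := S9G.d_pos hdy0
        have hxQ0' : xOf Q ∈ ((cubeAt (xOf Q)).scale (1+10*cG)).toSet := by
          apply S9G.scale_mono (t := 1) (t' := 1+10*cG) (by norm_num [cG]) hd0pos.le
          rw [S9G.toSet_scale_one]
          exact hxQ0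
        obtain ⟨hg1, hg2⟩ := S.goodGeom Q hQCZ _ hQ0CZ ⟨xOf Q, hx1', hxQ0'⟩
        rw [S9G.side_eq hdy, S9G.side_eq hdy0] at hg1 hg2
        have hexp : S9G.expn Q - m0 (xOf Q) ∈ Finset.Icc (-6:ℤ) 6 := by
          rw [Finset.mem_Icc]
          constructor
          · have := haux (m0 (xOf Q)) (S9G.expn Q) (by rw [hm0def]; linarith)
            omega
          · have := haux (S9G.expn Q) (m0 (xOf Q)) (by rw [hm0def]; linarith)
            omega
        refine ⟨hdy, hx2, hexp, ?_⟩
        have hdd := S9G.dist_center_le (Q := Q) (t := 1+10*cG) (by norm_num [cG]) hdpos.le hx1'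
        have h2kpos : (0:ℝ) < (2:ℝ)^(S9G.expn Q) := by positivity
        rw [dist_comm]
        calc dist (xOf Q) Q.c ≤ (1+10*cG)*Q.d := hdd
          _ ≤ 1 * (2:ℝ)^(S9G.expn Q) := by
              rw [S9G.expn_spec hdy]
              rw [cG]
              nlinarith [h2kpos]
      have hfib : F2.card = ∑ p ∈ E ×ˢ Finset.Icc (-6:ℤ) 6,
          (F2.filter (fun Q => (xOf Q, S9G.expn Q - m0 (xOf Q)) = p)).card := by
        apply Finset.card_eq_sum_card_fiberwise
        intro Q hQ
        obtain ⟨-, hx2, hdm, -⟩ := hprop Q hQ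
        rw [Finset.mem_coe, Finset.mem_product]
        exact ⟨hx2, hdm⟩
      have hper : ∀ p ∈ E ×ˢ Finset.Icc (-6:ℤ) 6,
          ((F2.filter (fun Q => (xOf Q, S9G.expn Q - m0 (xOf Q)) = p)).card : ℝ) ≤ 7^n := by
        intro p _
        have hQs : ∀ Q ∈ F2.filter (fun Q => (xOf Q, S9G.expn Q - m0 (xOf Q)) = p),
            Q.Dyadic ∧ S9G.expn Q = m0 p.1 + p.2 ∧
            dist Q.c p.1 ≤ 1 * (2:ℝ)^(m0 p.1 + p.2) := by
          intro Q hQmem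
          rw [Finset.mem_filter] at hQmem
          obtain ⟨hQF2, hQp⟩ := hQmem
          rw [Prod.mk.injEq] at hQp
          obtain ⟨hqx, hqd⟩ := hQp
          obtain ⟨hdy, -, -, hdist⟩ := hprop Q hQF2
          have hke : S9G.expn Q = m0 p.1 + p.2 := by rw [← hqx]; omega
          refine ⟨hdy, hke, ?_⟩
          rw [← hke, ← hqx]
          exact hdist
        have hcc := S9G.cube_count (F2.filter (fun Q => (xOf Q, S9G.expn Q - m0 (xOf Q)) = p))
          (m0 p.1 + p.2) p.1 1 (by norm_num) hQs
        calc ((F2.filter (fun Q => (xOf Q, S9G.expn Q - m0 (xOf Q)) = p)).card : ℝ)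
            ≤ (2*((⌈(1:ℝ)⌉₊ : ℝ) + 2) + 1)^n := hcc
          _ = 7^n := by norm_num
      calc (F2.card : ℝ)
          = ∑ p ∈ E ×ˢ Finset.Icc (-6:ℤ) 6,
            ((F2.filter (fun Q => (xOf Q, S9G.expn Q - m0 (xOf Q)) = p)).card : ℝ) := by
            rw [hfib]; push_cast; rfl
        _ ≤ ∑ _p ∈ E ×ˢ Finset.Icc (-6:ℤ) 6, (7:ℝ)^n := Finset.sum_le_sum hper
        _ = ((E ×ˢ Finset.Icc (-6:ℤ) 6).card : ℝ) * 7^n := by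
            rw [Finset.sum_const, nsmul_eq_mul]
        _ = 13 * 7^n * E.card := by
            rw [Finset.card_product, Int.card_Icc]
            push_cast
            norm_num
            ring
    have hsplit : F.card ≤ F1.card + F2.card := by
      have h1 : F2 ⊆ F := Finset.filter_subset _ _
      have h3 : F1.card = F.card - F2.card := Finset.card_sdiff_of_subset h1
      have h2 := Finset.card_le_card h1
      omega
    calc (F.card : ℝ) ≤ (F1.card : ℝ) + (F2.card : ℝ) := by exact_mod_cast hsplit
      _ ≤ C1 * (17*W^2) * E.card + 13 * 7^n * E.card := add_le_add hbound1 hbound2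
      _ = C * E.card := by rw [hCdef]; ring
  -- ================= wrap up =================
  have hmem : ∀ Q : Cube n, Q ∈ {Q ∈ S.CZ | ¬ Interstellar A S.E Q} ↔
      (Q ∈ S.CZ ∧ ¬ Interstellar A E Q) := by
    intro Q
    rw [← hEdef]
    rfl
  have hfin : {Q ∈ S.CZ | ¬ Interstellar A S.E Q}.Finite := by
    by_contra hinf
    obtain ⟨Fs, hFsub, hFcard⟩ := Set.Infinite.exists_subset_card_eq hinf (⌈C * E.card⌉₊ + 1)
    have hb := key Fs (fun Q hQ => (hmem Q).1 (hFsub hQ))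
    rw [hFcard] at hb
    have h1 : C * E.card ≤ (⌈C * E.card⌉₊ : ℝ) := Nat.le_ceil _
    push_cast at hb
    linarith
  refine ⟨hfin, ?_⟩
  have hb := key hfin.toFinset (fun Q hQ => (hmem Q).1 ((Set.Finite.mem_toFinset hfin).1 hQ))
  rw [← Set.Finite.coe_toFinset hfin, Set.ncard_coe_finset]
  exact hb
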